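/- Let f : 2^N → ℝ be a non-negative submodular function on a finite ground set N with multilinear extension F, let c, τ ≥ 0 be reals and k > 0 a real. Let u_1, u_2, …, u_ℓ be distinct elements of N and let x̂ ∈ [0,1]^N be a vector whose support is {u_1, …, u_ℓ} and which satisfies ‖x̂‖₁ = k. If for every 1 ≤ i ≤ ℓ it holds that ∂_{u_i}F(x̂ ∧ 1_{{u_1,…,u_{i−1}}}) ≥ cτ/k, then F(x̂) ≥ cτ. -/
import Mathlib


open Finset

/-- A set function `f` on a finite ground set is submodular if
`f(A ∪ {u}) − f(A) ≥ f(B ∪ {u}) − f(B)` for all `A ⊆ B` and `u ∉ B`. -/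
def Submodular {α : Type*} [DecidableEq α] (f : Finset α → ℝ) : Prop :=
  ∀ A B : Finset α, A ⊆ B → ∀ u ∉ B, f (insert u A) - f A ≥ f (insert u B) - f B

/-- The multilinear extension `F` of a set function `f`. -/
noncomputable def multilinear {α : Type*} [Fintype α] [DecidableEq α]
    (f : Finset α → ℝ) (x : α → ℝ) : ℝ :=
  ∑ A : Finset α, f A * ((∏ u ∈ A, x u) * ∏ u ∈ Aᶜ, (1 - x u))

/-- The partial derivative `∂_u F(x) = F(x ∨ 1_u) − F(x ∧ 1_{N∖{u}})` of the multilinear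
extension of `f`, where `∨`/`∧` are the coordinate-wise max/min of vectors. -/
noncomputable def mlDeriv {α : Type*} [Fintype α] [DecidableEq α]
    (f : Finset α → ℝ) (u : α) (x : α → ℝ) : ℝ :=
  multilinear f (fun v => max (x v) (if v = u then 1 else 0))
    - multilinear f (fun v => min (x v) (if v = u then 0 else 1))

section aux
variable {α : Type*} [Fintype α] [DecidableEq α]

lemma ml_update (f : Finset α → ℝ) (x : α → ℝ) (w : α) (t : ℝ) :
    multilinear f (Function.update x w t) =
      (1 - t) * ∑ A ∈ univ.filter (fun A : Finset α => w ∉ A),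
          f A * ((∏ v ∈ A, x v) * ∏ v ∈ Aᶜ.erase w, (1 - x v))
      + t * ∑ A ∈ univ.filter (fun A : Finset α => w ∈ A),
          f A * ((∏ v ∈ A.erase w, x v) * ∏ v ∈ Aᶜ, (1 - x v)) := by
  unfold multilinear
  rw [← Finset.sum_filter_add_sum_filter_not univ (fun A : Finset α => w ∈ A),
    Finset.mul_sum, Finset.mul_sum, add_comm]
  congr 1
  · apply Finset.sum_congr rfl
    intro A hA
    simp only [mem_filter, mem_univ, true_and] at hA
    have hw : w ∈ Aᶜ := by simpa using hA
    rw [← Finset.mul_prod_erase _ _ hw]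
    have h1 : ∏ v ∈ A, Function.update x w t v = ∏ v ∈ A, x v :=
      Finset.prod_congr rfl fun v hv =>
        Function.update_of_ne (by rintro rfl; exact hA hv) _ _
    have h2 : ∏ v ∈ Aᶜ.erase w, (1 - Function.update x w t v)
        = ∏ v ∈ Aᶜ.erase w, (1 - x v) :=
      Finset.prod_congr rfl fun v hv => by
        rw [Function.update_of_ne (Finset.ne_of_mem_erase hv)]
    rw [h1, h2, Function.update_self]
    ring
  · apply Finset.sum_congr rfl
    intro A hA
    simp only [mem_filter, mem_univ, true_and] at hA
    rw [← Finset.mul_prod_erase _ _ hA]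
    have h1 : ∏ v ∈ A.erase w, Function.update x w t v = ∏ v ∈ A.erase w, x v :=
      Finset.prod_congr rfl fun v hv => Function.update_of_ne (Finset.ne_of_mem_erase hv) _ _
    have h2 : ∏ v ∈ Aᶜ, (1 - Function.update x w t v) = ∏ v ∈ Aᶜ, (1 - x v) :=
      Finset.prod_congr rfl fun v hv => by
        rw [Function.update_of_ne (by rintro rfl; simp at hv; exact hv hA)]
    rw [h1, h2, Function.update_self]
    ring

lemma ml_affine (f : Finset α → ℝ) (x : α → ℝ) (w : α) (t : ℝ) :
    multilinear f (Function.update x w t) =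
      multilinear f (Function.update x w 0)
      + t * (multilinear f (Function.update x w 1)
          - multilinear f (Function.update x w 0)) := by
  rw [ml_update f x w t, ml_update f x w 0, ml_update f x w 1]; ring

lemma ml_zero (f : Finset α → ℝ) : multilinear f (fun _ => (0:ℝ)) = f ∅ := by
  unfold multilinear
  rw [Finset.sum_eq_single ∅]
  · simp
  · intro A _ hA
    have : (∏ v ∈ A, (0:ℝ)) = 0 := by
      rw [Finset.prod_const]
      exact zero_pow (by simpa [Finset.card_eq_zero] using hA)
    simp [this]
  · simp

lemma mlDeriv_eq (f : Finset α → ℝ) (w : α) (z : α → ℝ)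
    (hz : ∀ v, z v ∈ Set.Icc (0:ℝ) 1) :
    mlDeriv f w z = multilinear f (Function.update z w 1)
      - multilinear f (Function.update z w 0) := by
  unfold mlDeriv
  congr 1
  · congr 1
    funext v
    rcases eq_or_ne v w with rfl | hv
    · simp [max_eq_right (hz v).2]
    · simp [hv, max_eq_left (hz v).1]
  · congr 1
    funext v
    rcases eq_or_ne v w with rfl | hv
    · simp [min_eq_right (hz v).1]
    · simp [hv, min_eq_left (hz v).2]

end aux

/-- (cf. Lemma `Fx-exactlyK`) If `x̂ ∈ [0,1]^N` has support
`{u_1, …, u_ℓ}` (with the `u_i` distinct), `‖x̂‖₁ = k`, and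
`∂_{u_i}F(x̂ ∧ 1_{{u_1,…,u_{i−1}}}) ≥ cτ/k` for every `i`, then `F(x̂) ≥ cτ`. -/
theorem stmt_5 {α : Type*} [Fintype α] [DecidableEq α] (f : Finset α → ℝ)
    (hf0 : ∀ A : Finset α, 0 ≤ f A) (hsub : Submodular f)
    (c τ : ℝ) (hc : 0 ≤ c) (hτ : 0 ≤ τ) (k : ℝ) (hk : 0 < k)
    (ℓ : ℕ) (u : Fin ℓ → α) (hu : Function.Injective u)
    (x : α → ℝ) (hx : ∀ v, x v ∈ Set.Icc (0 : ℝ) 1)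
    (hsupp : ∀ v, 0 < x v ↔ v ∈ Finset.image u Finset.univ)
    (hnorm : ∑ v, x v = k)
    (hthresh : ∀ i : Fin ℓ,
      c * τ / k ≤ mlDeriv f (u i)
        (fun v => if v ∈ (Finset.univ.filter (fun j : Fin ℓ => j < i)).image u
          then x v else 0)) :
    c * τ ≤ multilinear f x := by
  set y : ℕ → α → ℝ := fun n v =>
    if v ∈ (Finset.univ.filter (fun j : Fin ℓ => (j : ℕ) < n)).image u then x v else 0
    with hy
  have hyIcc : ∀ n v, y n v ∈ Set.Icc (0:ℝ) 1 := by
    intro n v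
    simp only [hy]
    split
    · exact hx v
    · exact ⟨le_refl 0, zero_le_one⟩
  have hy0 : y 0 = fun _ => (0:ℝ) := by
    funext v; simp [hy]
  have hyℓ : y ℓ = x := by
    funext v
    simp only [hy]
    split
    · rfl
    · rename_i h
      have : ¬ 0 < x v := by
        rw [hsupp]
        intro hv
        apply h
        rw [Finset.mem_image] at hv ⊢
        obtain ⟨j, _, hj⟩ := hv
        exact ⟨j, by simp [j.isLt], hj⟩
      linarith [(hx v).1]
  have hyzero : ∀ n (hn : n < ℓ), y n (u ⟨n, hn⟩) = 0 := by
    intro n hn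
    have hnm : u ⟨n, hn⟩ ∉ (univ.filter (fun j : Fin ℓ => (j : ℕ) < n)).image u := by
      rw [Finset.mem_image]
      rintro ⟨j, hj, hj2⟩
      have := hu hj2
      simp only [mem_filter, mem_univ, true_and] at hj
      rw [this] at hj
      exact lt_irrefl n hj
    simp only [hy]
    rw [if_neg hnm]
  have hystep : ∀ n (hn : n < ℓ),
      y (n+1) = Function.update (y n) (u ⟨n, hn⟩) (x (u ⟨n, hn⟩)) := by
    intro n hn
    funext v
    rcases eq_or_ne v (u ⟨n, hn⟩) with rfl | hv
    · rw [Function.update_self]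
      simp only [hy]
      rw [if_pos]
      rw [Finset.mem_image]
      exact ⟨⟨n, hn⟩, by simp, rfl⟩
    · rw [Function.update_of_ne hv]
      simp only [hy]
      have hiff : (v ∈ (univ.filter (fun j : Fin ℓ => (j : ℕ) < n + 1)).image u)
          ↔ (v ∈ (univ.filter (fun j : Fin ℓ => (j : ℕ) < n)).image u) := by
        rw [Finset.mem_image, Finset.mem_image]
        constructor
        · rintro ⟨j, hj, rfl⟩
          simp only [mem_filter, mem_univ, true_and] at hj
          refine ⟨j, ?_, rfl⟩
          simp only [mem_filter, mem_univ, true_and]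
          rcases Nat.lt_succ_iff_lt_or_eq.mp hj with h | h
          · exact h
          · exfalso; exact hv (by congr 1; exact Fin.ext h)
        · rintro ⟨j, hj, rfl⟩
          simp only [mem_filter, mem_univ, true_and] at hj
          exact ⟨j, by simp only [mem_filter, mem_univ, true_and]; omega, rfl⟩
      rw [if_congr hiff rfl rfl]
  have key : ∀ n, n ≤ ℓ →
      f ∅ + (∑ j ∈ univ.filter (fun j : Fin ℓ => (j : ℕ) < n), x (u j)) * (c * τ / k)
        ≤ multilinear f (y n) := by
    intro n
    induction n with
    | zero =>
      intro _
      have : univ.filter (fun j : Fin ℓ => (j : ℕ) < 0) = ∅ := by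
        apply Finset.filter_false_of_mem; intro j _; omega
      rw [this, hy0, ml_zero]
      simp only [Finset.sum_empty, zero_mul, add_zero, le_refl]
    | succ n ih =>
      intro hn1
      have hn : n < ℓ := by omega
      have ih' := ih (le_of_lt hn)
      set w := u ⟨n, hn⟩ with hw
      have h1 : multilinear f (y (n+1)) = multilinear f (y n) + x w * mlDeriv f w (y n) := by
        rw [hystep n hn, ml_affine, mlDeriv_eq _ _ _ (hyIcc n)]
        have hupd : Function.update (y n) w 0 = y n := by
          rw [← hyzero n hn]
          exact Function.update_eq_self _ _
        rw [hupd]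
      have h2 : c * τ / k ≤ mlDeriv f w (y n) := by
        have h := hthresh ⟨n, hn⟩
        have hveq : (fun v => if v ∈ (Finset.univ.filter
            (fun j : Fin ℓ => j < (⟨n, hn⟩ : Fin ℓ))).image u then x v else 0) = y n := by
          funext v
          simp only [hy]
          refine if_congr ?_ rfl rfl
          rw [Finset.mem_image, Finset.mem_image]
          constructor <;>
            · rintro ⟨j, hj, rfl⟩
              simp only [mem_filter, mem_univ, true_and, Fin.lt_def] at hj
              exact ⟨j, by simp only [mem_filter, mem_univ, true_and, Fin.lt_def]; omega, rfl⟩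
        rwa [hveq] at h
      have hxw0 : 0 ≤ x w := (hx w).1
      have h3 : x w * (c * τ / k) ≤ x w * mlDeriv f w (y n) :=
        mul_le_mul_of_nonneg_left h2 hxw0
      have hfilter : univ.filter (fun j : Fin ℓ => (j : ℕ) < n + 1)
          = insert (⟨n, hn⟩ : Fin ℓ) (univ.filter (fun j : Fin ℓ => (j : ℕ) < n)) := by
        ext j
        simp only [mem_filter, mem_univ, true_and, Finset.mem_insert, Fin.ext_iff]
        omega
      have hnotmem : (⟨n, hn⟩ : Fin ℓ) ∉ univ.filter (fun j : Fin ℓ => (j : ℕ) < n) := by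
        simp
      rw [hfilter, Finset.sum_insert hnotmem]
      rw [h1]
      have : (x (u ⟨n, hn⟩) + ∑ j ∈ univ.filter (fun j : Fin ℓ => (j : ℕ) < n), x (u j))
          * (c * τ / k)
          = (∑ j ∈ univ.filter (fun j : Fin ℓ => (j : ℕ) < n), x (u j)) * (c * τ / k)
            + x w * (c * τ / k) := by rw [hw]; ring
      rw [this]
      linarith
  have hkey := key ℓ le_rfl
  have hfilterℓ : univ.filter (fun j : Fin ℓ => (j : ℕ) < ℓ) = univ := by
    apply Finset.filter_true_of_mem; intro j _; exact j.isLt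
  have hsum : ∑ j : Fin ℓ, x (u j) = k := by
    rw [← hnorm]
    rw [show (∑ j : Fin ℓ, x (u j)) = ∑ v ∈ Finset.image u univ, x v from
      (Finset.sum_image (fun a _ b _ h => hu h)).symm]
    apply Finset.sum_subset (Finset.subset_univ _)
    intro v _ hv
    have : ¬ 0 < x v := by rw [hsupp]; exact hv
    linarith [(hx v).1]
  rw [hfilterℓ, hsum, hyℓ] at hkey
  have : k * (c * τ / k) = c * τ := by
    field_simp
  rw [this] at hkey
  linarith [hf0 ∅]
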